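/- Let η be a positive equivalence relation. If ℕ is the only η-infinite r.e. set, then ℕ is not contained in any behaviourally correctly learnable η-family. -/

import Mathlib

namespace PEL

/-- Evaluation of the `e`-th partial recursive function (via the standard
numbering of `Nat.Partrec.Code`). -/
def evalCode (e : ℕ) (x : ℕ) : Part ℕ :=
  (Denumerable.ofNat Nat.Partrec.Code e).eval x

/-- The `e`-th recursively enumerable set `W_e = dom φ_e`. -/
def W (e : ℕ) : Set ℕ := {x | (evalCode e x).Dom}

/-- A set is r.e. iff it equals some `W_e`. -/
def RESet (S : Set ℕ) : Prop := ∃ e, W e = S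

/-- A positive equivalence relation: an r.e. equivalence relation on ℕ
with infinitely many equivalence classes. -/
structure PosEq where
  rel : ℕ → ℕ → Prop
  equiv : Equivalence rel
  re : ∃ e, ∀ x y, rel x y ↔ Nat.pair x y ∈ W e
  classes_infinite : (Set.range fun x => {y | rel x y}).Infinite

/-- The η-equivalence class of `x`. -/
def classOf (η : PosEq) (x : ℕ) : Set ℕ := {y | η.rel x y}

/-- A set is η-closed iff it is a union of η-equivalence classes. -/
def EtaClosed (η : PosEq) (S : Set ℕ) : Prop := ∀ x ∈ S, classOf η x ⊆ S

/-- A set is η-finite iff it is a union of finitely many η-equivalence classes. -/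
def EtaFinite (η : PosEq) (S : Set ℕ) : Prop :=
  EtaClosed η S ∧ (classOf η '' S).Finite

/-- A set is η-infinite iff it is a union of infinitely many η-equivalence classes. -/
def EtaInfinite (η : PosEq) (S : Set ℕ) : Prop :=
  EtaClosed η S ∧ (classOf η '' S).Infinite

/-- `f` is a one-one uniformly r.e. numbering of the class `C`:
`f` is computable, `i ↦ W_{f i}` is injective, and `C = {W_{f i} : i ∈ ℕ}`. -/
def OneOneNumbering (f : ℕ → ℕ) (C : Set (Set ℕ)) : Prop :=
  Computable f ∧ (∀ i j, W (f i) = W (f j) → i = j) ∧ C = Set.range fun i => W (f i)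

/-- An η-family: an (automatically infinite) class of η-closed r.e. sets
admitting a one-one uniformly r.e. numbering. -/
def EtaFamily (η : PosEq) (C : Set (Set ℕ)) : Prop :=
  (∀ L ∈ C, EtaClosed η L) ∧ ∃ f, OneOneNumbering f C

/-- `a η n` is the `n`-th (in ascending order) least representative of an
η-equivalence class. -/
noncomputable def a (η : PosEq) (n : ℕ) : ℕ := Nat.nth (fun x => ∀ y, η.rel x y → x ≤ y) n

/-- `A η n = [a_0] ∪ … ∪ [a_{n-1}]`. -/
def A (η : PosEq) (n : ℕ) : Set ℕ := {x | ∃ m < n, η.rel (a η m) x}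

/-- The ascending family `𝒜_η = {A_n : n ∈ ℕ}`. -/
def ascendingFamily (η : PosEq) : Set (Set ℕ) := Set.range (A η)

/-- A learner: a map from finite sequences over ℕ ∪ {#} (with `none` as the
pause symbol `#`) to hypotheses in ℕ ∪ {?} (with `none` as `?`). -/
abbrev Learner := List (Option ℕ) → Option ℕ

/-- The content of a text. -/
def cntT (T : ℕ → Option ℕ) : Set ℕ := {x | ∃ n, T n = some x}

/-- `T` is a text for `L`. -/
def IsText (T : ℕ → Option ℕ) (L : Set ℕ) : Prop := cntT T = L

/-- The initial segment `T[n] = T(0), …, T(n-1)`. -/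
def seg (T : ℕ → Option ℕ) (n : ℕ) : List (Option ℕ) := (List.range n).map T

/-- The content of a finite sequence. -/
def cntL (σ : List (Option ℕ)) : Set ℕ := {x | some x ∈ σ}

/-- Explanatory learning with hypotheses interpreted in hypothesis space `H`. -/
def ExLearnsIn (H : ℕ → Set ℕ) (M : Learner) (C : Set (Set ℕ)) : Prop :=
  ∀ L ∈ C, ∀ T, IsText T L →
    ∃ n e, M (seg T n) = some e ∧ H e = L ∧ ∀ j, n ≤ j → M (seg T j) = M (seg T n)

/-- Behaviourally correct learning with hypothesis space `H`. -/
def BCLearnsIn (H : ℕ → Set ℕ) (M : Learner) (C : Set (Set ℕ)) : Prop :=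
  ∀ L ∈ C, ∀ T, IsText T L →
    ∃ n, ∀ j, n ≤ j → ∃ e, M (seg T j) = some e ∧ H e = L

/-- Finite (one-shot) learning with hypothesis space `H`. -/
def FinLearnsIn (H : ℕ → Set ℕ) (M : Learner) (C : Set (Set ℕ)) : Prop :=
  ∀ L ∈ C, ∀ T, IsText T L →
    ∃ n e, M (seg T n) = some e ∧ H e = L ∧ (∀ m, m < n → M (seg T m) = none) ∧
      ∀ j, n ≤ j → M (seg T j) = M (seg T n)

/-- The sequence of hypotheses of `M` on text `T` converges. -/
def ConvergesOn (M : Learner) (T : ℕ → Option ℕ) : Prop :=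
  ∃ n, ∀ j, n ≤ j → M (seg T j) = M (seg T n)

/-- Confident learning with hypothesis space `H`: explanatory learning with
convergence on every text for every subset of ℕ. -/
def ConfLearnsIn (H : ℕ → Set ℕ) (M : Learner) (C : Set (Set ℕ)) : Prop :=
  ExLearnsIn H M C ∧ ∀ T, ConvergesOn M T

/-- Vacillatory learning with hypothesis space `H`. -/
def VacLearnsIn (H : ℕ → Set ℕ) (M : Learner) (C : Set (Set ℕ)) : Prop :=
  BCLearnsIn H M C ∧
    ∀ L ∈ C, ∀ T, IsText T L → {h : Option ℕ | ∃ n, 1 ≤ n ∧ M (seg T n) = h}.Finite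

/-- Weakly confident learning with hypothesis space `H`: explanatory learning
with convergence on every text consistent with the class. -/
def WConfLearnsIn (H : ℕ → Set ℕ) (M : Learner) (C : Set (Set ℕ)) : Prop :=
  ExLearnsIn H M C ∧ ∀ T, (∃ L ∈ C, cntT T ⊆ L) → ConvergesOn M T

def ExLearnable (C : Set (Set ℕ)) : Prop :=
  ∃ M : Learner, Computable M ∧ ExLearnsIn W M C

def BCLearnable (C : Set (Set ℕ)) : Prop :=
  ∃ M : Learner, Computable M ∧ BCLearnsIn W M C

def FinLearnable (C : Set (Set ℕ)) : Prop :=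
  ∃ M : Learner, Computable M ∧ FinLearnsIn W M C

def ConfLearnable (C : Set (Set ℕ)) : Prop :=
  ∃ M : Learner, Computable M ∧ ConfLearnsIn W M C

def VacLearnable (C : Set (Set ℕ)) : Prop :=
  ∃ M : Learner, Computable M ∧ VacLearnsIn W M C

def WConfLearnable (C : Set (Set ℕ)) : Prop :=
  ∃ M : Learner, Computable M ∧ WConfLearnsIn W M C



section Stmt6Aux

/- ### `seg` helpers -/

private lemma length_seg (T : ℕ → Option ℕ) (n : ℕ) : (seg T n).length = n := by
  simp [seg]

private lemma seg_getD {T : ℕ → Option ℕ} {k n : ℕ} (h : k < n) :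
    (seg T n).getD k none = T k := by
  rw [List.getD_eq_getElem _ _ (by simpa [length_seg] using h)]
  simp [seg]

private lemma seg_prefix (T : ℕ → Option ℕ) {a b : ℕ} (h : a ≤ b) :
    seg T a <+: seg T b := by
  refine ⟨(List.range (b - a)).map (fun x => T (a + x)), ?_⟩
  have : b = a + (b - a) := by omega
  rw [seg, seg, this, List.range_add, List.map_append, List.map_map]
  simp [Function.comp]

private lemma seg_of_agree {T : ℕ → Option ℕ} {l : List (Option ℕ)}
    (h : ∀ k, k < l.length → T k = l.getD k none) : seg T l.length = l := by
  apply List.ext_getElem (by simp [length_seg])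
  intro k h1 h2
  have := h k h2
  rw [List.getD_eq_getElem _ _ h2] at this
  simpa [seg] using this

/- ### fuel / r.e. helpers -/

private lemma dom_iff_fuel (c : Nat.Partrec.Code) (z : ℕ) :
    (c.eval z).Dom ↔ ∃ s, (Nat.Partrec.Code.evaln s c z).isSome := by
  rw [Part.dom_iff_mem]
  constructor
  · rintro ⟨v, hv⟩
    obtain ⟨k, hk⟩ := Nat.Partrec.Code.evaln_complete.1 hv
    exact ⟨k, by simp [Option.isSome_iff_exists, Option.mem_def.1 hk]⟩
  · rintro ⟨s, hs⟩
    obtain ⟨a, ha⟩ := Option.isSome_iff_exists.1 hs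
    exact ⟨a, Nat.Partrec.Code.evaln_sound (Option.mem_def.2 ha)⟩

private lemma fuel_all (c : Nat.Partrec.Code) (l : List ℕ) (h : ∀ z ∈ l, (c.eval z).Dom) :
    ∃ s, ∀ z ∈ l, (Nat.Partrec.Code.evaln s c z).isSome := by
  induction l with
  | nil => exact ⟨0, by simp⟩
  | cons a t ih =>
      obtain ⟨s1, hs1⟩ := (dom_iff_fuel c a).1 (h a (by simp))
      obtain ⟨s2, hs2⟩ := ih (fun z hz => h z (by simp [hz]))
      refine ⟨max s1 s2, ?_⟩
      intro z hz
      rcases List.mem_cons.1 hz with rfl | hz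
      · obtain ⟨v, hv⟩ := Option.isSome_iff_exists.1 hs1
        exact Option.isSome_iff_exists.2
          ⟨v, Nat.Partrec.Code.evaln_mono (le_max_left _ _) hv⟩
      · obtain ⟨v, hv⟩ := Option.isSome_iff_exists.1 (hs2 z hz)
        exact Option.isSome_iff_exists.2
          ⟨v, Nat.Partrec.Code.evaln_mono (le_max_right _ _) hv⟩

private lemma exists_W_eq (R : ℕ → ℕ → Bool) (hR : Computable₂ R) :
    ∃ e, W e = {y | ∃ n, R y n = true} := by
  have hp : Partrec fun y : ℕ => Nat.rfind fun n => (Part.some (R y n) : Part Bool) :=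
    Partrec.rfind hR.partrec₂
  obtain ⟨c, hc⟩ := Nat.Partrec.Code.exists_code.1 (Partrec.nat_iff.1 hp)
  refine ⟨Encodable.encode c, ?_⟩
  ext y
  show (evalCode (Encodable.encode c) y).Dom ↔ _
  rw [evalCode, Denumerable.ofNat_encode, hc]
  show (Nat.rfind fun n => (Part.some (R y n) : Part Bool)).Dom ↔ _
  refine (Nat.rfind_dom (p := fun n => (Part.some (R y n) : Part Bool))).trans ?_
  constructor
  · rintro ⟨n, h1, _⟩
    exact ⟨n, (Part.mem_some_iff.1 h1).symm⟩
  · rintro ⟨n, h1⟩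
    exact ⟨n, Part.mem_some_iff.2 h1.symm, fun _ => trivial⟩

/-- The key effective union set used in the proof of `stmt6` is r.e. -/
private lemma RESet_U (f : ℕ → ℕ) (hf : Computable f) (N : ℕ) (Sl : List ℕ) :
    RESet {y | ∃ i, N < i ∧ (∀ z ∈ Sl, z ∈ W (f i)) ∧ y ∈ W (f i)} := by
  classical
  set cd : ℕ → Nat.Partrec.Code := fun i => Denumerable.ofNat Nat.Partrec.Code (f i)
    with hcddef
  have hcd : Computable cd := ((Primrec.ofNat Nat.Partrec.Code).to_comp).comp hf
  have hi : Computable fun p : ℕ × ℕ => p.2.unpair.1 :=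
    Computable.fst.comp (Computable.unpair.comp Computable.snd)
  have hs : Computable fun p : ℕ × ℕ => p.2.unpair.2 :=
    Computable.snd.comp (Computable.unpair.comp Computable.snd)
  have hev' : Computable fun q : (ℕ × Nat.Partrec.Code) × ℕ =>
      Nat.Partrec.Code.evaln q.1.1 q.1.2 q.2 :=
    Nat.Partrec.Code.primrec_evaln.to_comp
  have key : ∀ {z : ℕ × ℕ → ℕ}, Computable z →
      Computable fun p : ℕ × ℕ =>
        (Nat.Partrec.Code.evaln p.2.unpair.2 (cd p.2.unpair.1) (z p)).isSome := by
    intro z hz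
    exact Primrec.option_isSome.to_comp.comp
      (hev'.comp ((hs.pair (hcd.comp hi)).pair hz))
  have hall : Computable fun p : ℕ × ℕ =>
      Sl.all (fun zz =>
        (Nat.Partrec.Code.evaln p.2.unpair.2 (cd p.2.unpair.1) zz).isSome) := by
    induction Sl with
    | nil => exact (Computable.const true).of_eq (by simp)
    | cons a t ih =>
        exact ((Primrec.and.to_comp).comp (key (Computable.const a)) ih).of_eq
          (fun p => by simp [List.all_cons])
  have hlt : Computable fun p : ℕ × ℕ => decide (N < p.2.unpair.1) :=
    (Primrec₂.comp Primrec.nat_lt.decide (Primrec.const N)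
      (Primrec.fst.comp (Primrec.unpair.comp Primrec.snd))).to_comp
  set R : ℕ → ℕ → Bool := fun y n =>
    (decide (N < n.unpair.1) &&
      (Sl.all fun zz =>
        (Nat.Partrec.Code.evaln n.unpair.2 (cd n.unpair.1) zz).isSome)) &&
    (Nat.Partrec.Code.evaln n.unpair.2 (cd n.unpair.1) y).isSome with hRdef
  have hR : Computable₂ R :=
    Computable.to₂ ((Primrec.and.to_comp).comp ((Primrec.and.to_comp).comp hlt hall)
      (key Computable.fst))
  obtain ⟨e, he⟩ := exists_W_eq R hR
  refine ⟨e, ?_⟩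
  rw [he]
  ext y
  simp only [Set.mem_setOf_eq]
  constructor
  · rintro ⟨n, hn⟩
    rw [hRdef] at hn
    simp only [Bool.and_eq_true, decide_eq_true_eq, List.all_eq_true] at hn
    obtain ⟨⟨h1, h2⟩, h3⟩ := hn
    refine ⟨n.unpair.1, h1, fun z hz => ?_, ?_⟩
    · exact (dom_iff_fuel (cd n.unpair.1) z).2 ⟨n.unpair.2, h2 z hz⟩
    · exact (dom_iff_fuel (cd n.unpair.1) y).2 ⟨n.unpair.2, h3⟩
  · rintro ⟨i, h1, h2, h3⟩
    obtain ⟨s, hsn⟩ := fuel_all (cd i) (y :: Sl) (by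
      intro z hz
      rcases List.mem_cons.1 hz with rfl | hz
      · exact h3
      · exact h2 z hz)
    refine ⟨Nat.pair i s, ?_⟩
    rw [hRdef]
    simp only [Nat.unpair_pair, Bool.and_eq_true, decide_eq_true_eq, List.all_eq_true]
    exact ⟨⟨h1, fun z hz => hsn z (by simp [hz])⟩, hsn y (by simp)⟩

/-- Locking-finset lemma: if `M` BC-learns a class containing `ℕ`, then there is
a finite set `D` such that `ℕ` is the only member of the class containing `D`. -/
private lemma lock_lemma {C : Set (Set ℕ)} {M : Learner} (hM : BCLearnsIn W M C)
    (huniv : Set.univ ∈ C) :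
    ∃ D : Finset ℕ, ∀ L ∈ C, ↑D ⊆ L → L = Set.univ := by
  classical
  by_contra hno
  push_neg at hno
  have step : ∀ (σ : List (Option ℕ)) (n : ℕ), ∃ σ' : List (Option ℕ),
      σ <+: σ' ∧ σ.length < σ'.length ∧ σ'.getD σ.length none = some n ∧
      ∃ e, M σ' = some e ∧ W e ≠ Set.univ := by
    intro σ n
    obtain ⟨L, hLC, hDL, hLne⟩ := hno ((σ.filterMap id).toFinset ∪ {n})
    have hmemL : ∀ x, some x ∈ σ → x ∈ L := by
      intro x hx
      apply hDL
      simp only [Finset.coe_union, Finset.coe_singleton, Set.mem_union, Finset.mem_coe,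
        List.mem_toFinset, List.mem_filterMap]
      exact Or.inl ⟨some x, hx, rfl⟩
    have hnL : n ∈ L := hDL (by simp)
    set T' : ℕ → Option ℕ := fun k =>
      if k < σ.length then σ.getD k none
      else if k = σ.length then some n
      else some (if (k - σ.length - 1) ∈ L then k - σ.length - 1 else n) with hT'def
    have htext : IsText T' L := by
      ext x
      constructor
      · rintro ⟨k, hk⟩
        rw [hT'def] at hk
        simp only at hk
        split_ifs at hk with h1 h2 h3
        · apply hmemL
          rw [← hk]
          rw [List.getD_eq_getElem _ _ h1]
          exact List.getElem_mem h1
        · cases hk; exact hnL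
        · cases hk; exact h3
        · cases hk; exact hnL
      · intro hx
        refine ⟨σ.length + 1 + x, ?_⟩
        rw [hT'def]
        simp only
        rw [if_neg (by omega), if_neg (by omega)]
        have : σ.length + 1 + x - σ.length - 1 = x := by omega
        rw [this, if_pos hx]
    obtain ⟨n0, h0⟩ := hM L hLC T' htext
    obtain ⟨e, hMe, hWe⟩ := h0 (max n0 (σ.length + 1)) (le_max_left _ _)
    refine ⟨seg T' (max n0 (σ.length + 1)), ?_, ?_, ?_, e, hMe, by rw [hWe]; exact hLne⟩
    · have hσ : seg T' σ.length = σ := by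
        apply seg_of_agree
        intro k hk
        rw [hT'def]; simp only [if_pos hk]
      have hp : seg T' σ.length <+: seg T' (max n0 (σ.length + 1)) :=
        seg_prefix T' (le_trans (Nat.le_succ _) (le_max_right _ _))
      rw [hσ] at hp
      exact hp
    · rw [length_seg]; exact lt_of_lt_of_le (Nat.lt_succ_self _) (le_max_right _ _)
    · rw [seg_getD (lt_of_lt_of_le (Nat.lt_succ_self _) (le_max_right _ _))]
      rw [hT'def]; simp
  choose g hg1 hg2 hg3 hg4 using step
  set c : ℕ → List (Option ℕ) := fun n => Nat.rec [] (fun n σ => g σ n) n with hcdef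
  have hcs : ∀ n, c (n + 1) = g (c n) n := fun n => rfl
  have hpre : ∀ n, c n <+: c (n + 1) := fun n => hg1 (c n) n
  have hchain : ∀ a b, a ≤ b → c a <+: c b := by
    intro a b hab
    induction b with
    | zero => simp_all
    | succ b ih =>
        rcases Nat.lt_or_ge a (b + 1) with h | h
        · exact (ih (by omega)).trans (hpre b)
        · have : a = b + 1 := by omega
          subst this; exact List.prefix_refl _
  have hlen : ∀ n, n ≤ (c n).length := by
    intro n
    induction n with
    | zero => simp
    | succ n ih => exact lt_of_le_of_lt ih (hg2 (c n) n)
  set T : ℕ → Option ℕ := fun k => (c (k + 1)).getD k none with hTdef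
  have hagree : ∀ n k, k < (c n).length → T k = (c n).getD k none := by
    intro n k hk
    rcases le_total (k + 1) n with h | h
    · have hp := hchain (k + 1) n h
      have hk1 : k < (c (k + 1)).length := lt_of_lt_of_le (Nat.lt_succ_self k) (hlen (k + 1))
      rw [hTdef]
      simp only
      rw [List.getD_eq_getElem _ _ hk1, List.getD_eq_getElem _ _ hk]
      exact hp.getElem hk1
    · have hp := hchain n (k + 1) h
      have hk1 : k < (c (k + 1)).length := lt_of_lt_of_le hk hp.length_le
      rw [hTdef]
      simp only
      rw [List.getD_eq_getElem _ _ hk1, List.getD_eq_getElem _ _ hk]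
      exact (hp.getElem hk).symm
  have hseg : ∀ n, seg T (c n).length = c n := by
    intro n
    exact seg_of_agree (fun k hk => hagree n k hk)
  have htext : IsText T Set.univ := by
    ext x
    simp only [Set.mem_univ, iff_true]
    have hxlen : (c x).length < (c (x + 1)).length := hg2 (c x) x
    refine ⟨(c x).length, ?_⟩
    rw [hagree (x + 1) (c x).length hxlen]
    exact hg3 (c x) x
  obtain ⟨n0, h0⟩ := hM Set.univ huniv T htext
  obtain ⟨e, hMe, hWe⟩ := h0 (c (n0 + 1)).length (le_trans (Nat.le_succ n0) (hlen (n0 + 1)))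
  rw [hseg (n0 + 1)] at hMe
  obtain ⟨e', hMe', hWe'⟩ := hg4 (c n0) n0
  rw [hcs] at hMe
  rw [hMe'] at hMe
  exact hWe' (Option.some.inj hMe ▸ hWe)

end Stmt6Aux

/-- If ℕ is the only η-infinite r.e. set, then ℕ is not contained
in any behaviourally correctly learnable η-family. -/
theorem stmt6 (η : PosEq)
    (h : ∀ S : Set ℕ, RESet S → EtaInfinite η S → S = Set.univ) :
    ∀ C : Set (Set ℕ), EtaFamily η C → BCLearnable C → Set.univ ∉ C := by
  classical
  intro C hfam hlearn huniv
  obtain ⟨hclosed, f, hf_comp, hf_inj, hCeq⟩ := hfam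
  obtain ⟨M, _, hM⟩ := hlearn
  obtain ⟨D, hD⟩ := lock_lemma hM huniv
  have hmem : ∀ i, W (f i) ∈ C := fun i => by rw [hCeq]; exact ⟨i, rfl⟩
  obtain ⟨i0, hi0⟩ : ∃ i0, W (f i0) = Set.univ := by
    have h' := huniv
    rw [hCeq] at h'
    exact h'
  set AA : Finset ℕ → Set ℕ := fun S => {i | ∀ x ∈ S, x ∈ W (f i)} with hAA
  have hAD : AA D ⊆ {i0} := by
    intro i hi
    have h1 : ↑D ⊆ W (f i) := fun x hx => hi x hx
    have h2 := hD (W (f i)) (hmem i) h1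
    simp only [Set.mem_singleton_iff]
    exact hf_inj i i0 (h2.trans hi0.symm)
  set Q := D.powerset.filter (fun S => (AA S).Infinite) with hQ
  have hQne : Q.Nonempty := by
    refine ⟨∅, Finset.mem_filter.2 ⟨Finset.empty_mem_powerset D, ?_⟩⟩
    have hAe : AA ∅ = Set.univ := by
      ext i; simp [hAA]
    rw [hAe]
    exact Set.infinite_univ
  obtain ⟨S, hSQ, hSmax⟩ := Finset.exists_max_image Q Finset.card hQne
  have hSD : S ⊆ D := Finset.mem_powerset.1 (Finset.mem_filter.1 hSQ).1
  have hSinf : (AA S).Infinite := (Finset.mem_filter.1 hSQ).2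
  have hSne : S ≠ D := by
    rintro rfl
    exact hSinf (Set.Finite.subset (Set.finite_singleton i0) hAD)
  obtain ⟨x, hxD, hxS⟩ := Finset.exists_of_ssubset (lt_of_le_of_ne hSD hSne)
  have hfinx : (AA (insert x S)).Finite := by
    by_contra hinf
    have hmem' : insert x S ∈ Q := Finset.mem_filter.2
      ⟨Finset.mem_powerset.2 (Finset.insert_subset_iff.2 ⟨hxD, hSD⟩), hinf⟩
    have := hSmax _ hmem'
    rw [Finset.card_insert_of_notMem hxS] at this
    omega
  obtain ⟨N, hN⟩ := (hfinx.union (Set.finite_singleton i0)).bddAbove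
  have hNmem : ∀ i ∈ AA (insert x S) ∪ {i0}, i ≤ N := fun i hi => hN hi
  set Sl : List ℕ := S.sort (· ≤ ·) with hSl
  have hsort : ∀ i, (∀ z ∈ Sl, z ∈ W (f i)) ↔ i ∈ AA S := by
    intro i
    constructor
    · intro hz z hzS
      exact hz z ((Finset.mem_sort _).2 hzS)
    · intro hz z hzl
      exact hz z ((Finset.mem_sort _).1 hzl)
  set U : Set ℕ := {y | ∃ i, N < i ∧ (∀ z ∈ Sl, z ∈ W (f i)) ∧ y ∈ W (f i)} with hU
  have hUre : RESet U := RESet_U f hf_comp N Sl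
  have hkey : ∀ i, N < i → i ∈ AA S → x ∉ W (f i) := by
    intro i h1 h2 hx
    have hins : i ∈ AA (insert x S) := by
      intro z hz
      rcases Finset.mem_insert.1 hz with rfl | hz
      · exact hx
      · exact h2 z hz
    have := hNmem i (Or.inl hins)
    omega
  have hJinf : (AA S \ {i | i ≤ N}).Infinite := hSinf.diff (Set.finite_le_nat N)
  have hUclosed : EtaClosed η U := by
    rintro y ⟨i, h1, h2, h3⟩ z hz
    exact ⟨i, h1, h2, hclosed (W (f i)) (hmem i) y h3 hz⟩
  have hWU : ∀ i ∈ AA S \ {i | i ≤ N}, W (f i) ⊆ U := by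
    rintro i ⟨hiA, hiN⟩ y hy
    simp only [Set.mem_setOf_eq, not_le] at hiN
    exact ⟨i, hiN, (hsort i).2 hiA, hy⟩
  have hclosed_eq : ∀ L : Set ℕ, EtaClosed η L → ⋃₀ (classOf η '' L) = L := by
    intro L hL
    ext z
    constructor
    · rintro ⟨s, ⟨w, hw, rfl⟩, hz⟩
      exact hL w hw hz
    · intro hz
      exact ⟨classOf η z, ⟨z, hz, rfl⟩, η.equiv.refl z⟩
  have hUinf : (classOf η '' U).Infinite := by
    by_contra hfin
    rw [Set.not_infinite] at hfin
    have hJfin : (AA S \ {i | i ≤ N}).Finite := by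
      have hsub : AA S \ {i | i ≤ N} ⊆
          (fun i => classOf η '' (W (f i))) ⁻¹' {s | s ⊆ classOf η '' U} :=
        fun i hi => Set.image_mono (hWU i hi)
      refine Set.Finite.subset ?_ hsub
      refine Set.Finite.preimage ?_ hfin.finite_subsets
      intro i _ j _ hij
      apply hf_inj
      calc W (f i) = ⋃₀ (classOf η '' W (f i)) := (hclosed_eq _ (hclosed _ (hmem i))).symm
        _ = ⋃₀ (classOf η '' W (f j)) := by rw [show classOf η '' W (f i) = classOf η '' W (f j) from hij]
        _ = W (f j) := hclosed_eq _ (hclosed _ (hmem j))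
    exact hJinf hJfin
  have hUuniv : U = Set.univ := h U hUre ⟨hUclosed, hUinf⟩
  have hxU : x ∈ U := hUuniv ▸ Set.mem_univ x
  obtain ⟨i, h1, h2, h3⟩ := hxU
  exact hkey i h1 ((hsort i).1 h2) h3


end PEL
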